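/- arXiv:1411.4190 — 5 statements merged into one kernel-verified Lean document; each statement's English description precedes it below -/
import Mathlib

section
/- For every prime p, the endomorphism monoid End(G_{(1,0)}^(p)) of the JK-group G_{(1,0)}^(p) is not commutative; moreover the endomorphism monoid End(G_{(1,1)}^(2)) of the JK-group G_{(1,1)}^(2) is not commutative. -/
def gcomm {G : Type*} [Group G] (x y : G) : G := x⁻¹ * y⁻¹ * x * y

def jkRels (p : ℕ) (lam : ℕ × ℕ) : Set (FreeGroup (Fin 4)) :=
  {r | ∃ i j k : Fin 4,
      r = gcomm (gcomm (FreeGroup.of i) (FreeGroup.of j)) (FreeGroup.of k)} ∪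
  {FreeGroup.of 0 ^ p * (gcomm (FreeGroup.of 0) (FreeGroup.of 2))⁻¹,
   FreeGroup.of 1 ^ p *
     (gcomm (FreeGroup.of 0) (FreeGroup.of 2 ^ lam.1 * FreeGroup.of 3 ^ lam.2))⁻¹,
   FreeGroup.of 2 ^ p * (gcomm (FreeGroup.of 1) (FreeGroup.of 2 * FreeGroup.of 3))⁻¹,
   FreeGroup.of 3 ^ p * (gcomm (FreeGroup.of 1) (FreeGroup.of 3))⁻¹,
   gcomm (FreeGroup.of 0) (FreeGroup.of 1),
   gcomm (FreeGroup.of 2) (FreeGroup.of 3)}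

abbrev JKGroup (p : ℕ) (lam : ℕ × ℕ) : Type := PresentedGroup (jkRels p lam)

def jka₁ (p : ℕ) (lam : ℕ × ℕ) : JKGroup p lam := PresentedGroup.of 0
def jka₂ (p : ℕ) (lam : ℕ × ℕ) : JKGroup p lam := PresentedGroup.of 1
def jkb₁ (p : ℕ) (lam : ℕ × ℕ) : JKGroup p lam := PresentedGroup.of 2
def jkb₂ (p : ℕ) (lam : ℕ × ℕ) : JKGroup p lam := PresentedGroup.of 3

-- infra (assume proved, import from other file later)
lemma map_gcomm {G H : Type*} [Group G] [Group H] (F : G →* H) (x y : G) :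
    F (gcomm x y) = gcomm (F x) (F y) := by simp [gcomm]
lemma gcomm_eq_one_of_commute {G : Type*} [Group G] {x y : G} (h : Commute x y) :
    gcomm x y = 1 := by
  simp only [gcomm]; rw [(h.inv_left.inv_right).eq]; group
lemma commute_of_gcomm_eq_one {G : Type*} [Group G] {x y : G} (h : gcomm x y = 1) :
    Commute x y := by
  have : x * y = y * x * (x⁻¹ * y⁻¹ * x * y) := by group
  rw [show x⁻¹ * y⁻¹ * x * y = gcomm x y from rfl, h, mul_one] at this
  exact this


lemma mul_comm_gcomm {G : Type*} [Group G] (x y : G) : y * x = x * y * gcomm y x := by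
  simp only [gcomm]; group

lemma gcomm_mul_gcomm {G : Type*} [Group G] (x y : G) : gcomm x y * gcomm y x = 1 := by
  simp only [gcomm]; group

lemma gcomm_mul_right {G : Type*} [Group G] (x y z : G) :
    gcomm x (y * z) = gcomm x z * (z⁻¹ * gcomm x y * z) := by
  simp only [gcomm]; group

lemma gcomm_mul_left {G : Type*} [Group G] (x x' y : G) :
    gcomm (x * x') y = x'⁻¹ * gcomm x y * x' * gcomm x' y := by
  simp only [gcomm]; group

lemma gcomm_inv {G : Type*} [Group G] (x y : G) : gcomm y x = (gcomm x y)⁻¹ := by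
  simp only [gcomm]; group

section Rel
variable (p : ℕ) (lam : ℕ × ℕ)

lemma jk_mk_rel {r : FreeGroup (Fin 4)} (h : r ∈ jkRels p lam) :
    PresentedGroup.mk (jkRels p lam) r = 1 :=
  (QuotientGroup.eq_one_iff _).mpr (Subgroup.subset_normalClosure h)

lemma jk_triple (i j k : Fin 4) :
    gcomm (gcomm (PresentedGroup.of (rels := jkRels p lam) i) (PresentedGroup.of j))
      (PresentedGroup.of k) = 1 := by
  have h := jk_mk_rel p lam (Or.inl ⟨i, j, k, rfl⟩)
  rwa [map_gcomm, map_gcomm] at h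

lemma jk_comm_a : Commute (jka₁ p lam) (jka₂ p lam) := by
  have h := jk_mk_rel p lam (r := gcomm (FreeGroup.of 0) (FreeGroup.of 1))
    (Or.inr (by right; right; right; right; left; rfl))
  rw [map_gcomm] at h
  exact commute_of_gcomm_eq_one h

lemma jk_r1 : (jka₁ p lam) ^ p = gcomm (jka₁ p lam) (jkb₁ p lam) := by
  have h := jk_mk_rel p lam
    (r := FreeGroup.of 0 ^ p * (gcomm (FreeGroup.of 0) (FreeGroup.of 2))⁻¹)
    (Or.inr (by left; rfl))
  rw [map_mul, map_pow, map_inv, map_gcomm] at h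
  exact mul_inv_eq_one.mp h

lemma jk_r2 : (jka₂ p lam) ^ p
    = gcomm (jka₁ p lam) ((jkb₁ p lam) ^ lam.1 * (jkb₂ p lam) ^ lam.2) := by
  have h := jk_mk_rel p lam
    (r := FreeGroup.of 1 ^ p *
      (gcomm (FreeGroup.of 0) (FreeGroup.of 2 ^ lam.1 * FreeGroup.of 3 ^ lam.2))⁻¹)
    (Or.inr (by right; left; rfl))
  rw [map_mul, map_pow, map_inv, map_gcomm, map_mul, map_pow, map_pow] at h
  exact mul_inv_eq_one.mp h

lemma jk_r4 : (jkb₂ p lam) ^ p = gcomm (jka₂ p lam) (jkb₂ p lam) := by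
  have h := jk_mk_rel p lam
    (r := FreeGroup.of 3 ^ p * (gcomm (FreeGroup.of 1) (FreeGroup.of 3))⁻¹)
    (Or.inr (by right; right; right; left; rfl))
  rw [map_mul, map_pow, map_inv, map_gcomm] at h
  exact mul_inv_eq_one.mp h

end Rel

lemma lift_ok {G : Type*} [Group G] {p : ℕ} {lam : ℕ × ℕ} {f : Fin 4 → G}
    (hc : ∀ i j, Commute (f i) (f j)) (hp : ∀ i, f i ^ p = 1) :
    ∀ r ∈ jkRels p lam, FreeGroup.lift f r = 1 := by
  have hc1 : ∀ (x : Fin 4) (w : FreeGroup (Fin 4)), Commute (f x) (FreeGroup.lift f w) := by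
    intro x w
    induction w using FreeGroup.induction_on with
    | C1 => simpa using Commute.one_right (f x)
    | of y => rw [FreeGroup.lift_apply_of]; exact hc x y
    | inv_of y _ =>
        rw [map_inv, FreeGroup.lift_apply_of]
        exact (hc x y).inv_right
    | mul y z hy hz => rw [map_mul]; exact hy.mul_right hz
  have hall : ∀ v w : FreeGroup (Fin 4),
      Commute (FreeGroup.lift f v) (FreeGroup.lift f w) := by
    intro v w
    induction v using FreeGroup.induction_on with
    | C1 => simpa using Commute.one_left _
    | of y => rw [FreeGroup.lift_apply_of]; exact hc1 y w
    | inv_of y _ =>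
        rw [map_inv, FreeGroup.lift_apply_of]
        exact (hc1 y w).inv_left
    | mul y z hy hz => rw [map_mul]; exact hy.mul_left hz
  have hg : ∀ v w : FreeGroup (Fin 4), FreeGroup.lift f (gcomm v w) = 1 := by
    intro v w
    rw [map_gcomm]
    exact gcomm_eq_one_of_commute (hall v w)
  intro r hr
  rcases hr with ⟨i, j, k, rfl⟩ | hr
  · exact hg _ _
  · simp only [Set.mem_insert_iff, Set.mem_singleton_iff] at hr
    rcases hr with rfl | rfl | rfl | rfl | rfl | rfl
    · rw [map_mul, map_inv, hg, map_pow, FreeGroup.lift_apply_of, hp, inv_one, mul_one]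
    · rw [map_mul, map_inv, hg, map_pow, FreeGroup.lift_apply_of, hp, inv_one, mul_one]
    · rw [map_mul, map_inv, hg, map_pow, FreeGroup.lift_apply_of, hp, inv_one, mul_one]
    · rw [map_mul, map_inv, hg, map_pow, FreeGroup.lift_apply_of, hp, inv_one, mul_one]
    · exact hg _ _
    · exact hg _ _


section Part1
variable (p : ℕ)

lemma key1 : ((jka₁ p (1, 0))⁻¹ * jka₂ p (1, 0)) ^ p = 1 := by
  have hc : Commute (jka₁ p (1, 0))⁻¹ (jka₂ p (1, 0)) := (jk_comm_a p (1, 0)).inv_left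
  have h2 : (jka₂ p (1, 0)) ^ p = gcomm (jka₁ p (1, 0)) (jkb₁ p (1, 0)) := by
    simpa using jk_r2 p (1, 0)
  rw [hc.mul_pow, inv_pow, jk_r1 p (1, 0), h2, inv_mul_cancel]

theorem part1 (hp : p.Prime) :
    ¬ ∀ φ ψ : JKGroup p (1, 0) →* JKGroup p (1, 0), φ.comp ψ = ψ.comp φ := by
  intro H
  haveI : Fact (1 < p) := ⟨hp.one_lt⟩
  set x : JKGroup p (1, 0) := (jka₁ p (1, 0))⁻¹ * jka₂ p (1, 0) with hxdef
  have hxp : x ^ p = 1 := key1 p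
  -- the two endomorphisms
  set f : Fin 4 → JKGroup p (1, 0) := fun i => if i = 1 then x else 1 with hf
  set g : Fin 4 → JKGroup p (1, 0) := fun i => if i = 3 then x else 1 with hg
  have hcf : ∀ i j, Commute (f i) (f j) := by
    intro i j; simp only [hf]
    split_ifs <;>
      first | exact Commute.refl _ | exact Commute.one_left _ | exact Commute.one_right _
  have hpf : ∀ i, f i ^ p = 1 := by
    intro i; simp only [hf]; split_ifs
    · exact hxp
    · exact one_pow p
  have hcg : ∀ i j, Commute (g i) (g j) := by
    intro i j; simp only [hg]
    split_ifs <;>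
      first | exact Commute.refl _ | exact Commute.one_left _ | exact Commute.one_right _
  have hpg : ∀ i, g i ^ p = 1 := by
    intro i; simp only [hg]; split_ifs
    · exact hxp
    · exact one_pow p
  set ψ : JKGroup p (1, 0) →* JKGroup p (1, 0) := PresentedGroup.toGroup (lift_ok hcf hpf)
  set φ : JKGroup p (1, 0) →* JKGroup p (1, 0) := PresentedGroup.toGroup (lift_ok hcg hpg)
  have hψ1 : ψ (jka₁ p (1, 0)) = 1 := by
    rw [show jka₁ p (1, 0) = PresentedGroup.of 0 from rfl, PresentedGroup.toGroup.of]
    simp [hf]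
  have hψ2 : ψ (jka₂ p (1, 0)) = x := by
    rw [show jka₂ p (1, 0) = PresentedGroup.of 1 from rfl, PresentedGroup.toGroup.of]
    simp [hf]
  have hψ4 : ψ (jkb₂ p (1, 0)) = 1 := by
    rw [show jkb₂ p (1, 0) = PresentedGroup.of 3 from rfl, PresentedGroup.toGroup.of]
    simp [hf]
  have hφ4 : φ (jkb₂ p (1, 0)) = x := by
    rw [show jkb₂ p (1, 0) = PresentedGroup.of 3 from rfl, PresentedGroup.toGroup.of]
    simp [hg]
  have hev := DFunLike.congr_fun (H φ ψ) (jkb₂ p (1, 0))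
  rw [MonoidHom.comp_apply, MonoidHom.comp_apply, hψ4, map_one, hφ4] at hev
  -- hev : 1 = ψ x
  have hψx : ψ x = x := by
    rw [hxdef, map_mul, map_inv, hψ1, hψ2, inv_one, one_mul]
  rw [hψx] at hev
  -- now x = 1 contradicts: map to ZMod p
  set ρf : Fin 4 → Multiplicative (ZMod p) :=
    fun i => if i = 1 then Multiplicative.ofAdd (1 : ZMod p) else 1 with hρf
  have hcρ : ∀ i j, Commute (ρf i) (ρf j) := fun i j => Commute.all _ _
  have hpρ : ∀ i, ρf i ^ p = 1 := by
    intro i; simp only [hρf]; split_ifs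
    · rw [← ofAdd_nsmul, nsmul_eq_mul, mul_one, ZMod.natCast_self, ofAdd_zero]
    · exact one_pow p
  set ρ : JKGroup p (1, 0) →* Multiplicative (ZMod p) :=
    PresentedGroup.toGroup (lift_ok hcρ hpρ)
  have hρx : ρ x = Multiplicative.ofAdd (1 : ZMod p) := by
    rw [hxdef, map_mul, map_inv,
      show jka₁ p (1, 0) = PresentedGroup.of 0 from rfl,
      show jka₂ p (1, 0) = PresentedGroup.of 1 from rfl,
      PresentedGroup.toGroup.of, PresentedGroup.toGroup.of]
    simp [hρf]
  have : Multiplicative.ofAdd (1 : ZMod p) = 1 := by rw [← hρx, ← hev, map_one]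
  have h10 : (1 : ZMod p) = 0 := by
    simpa using this
  exact one_ne_zero h10

end Part1


section Part2

lemma key2 : (jka₁ 2 (1, 1) * jka₂ 2 (1, 1) * jkb₂ 2 (1, 1)) ^ 2 = 1 := by
  set a₁ := jka₁ 2 (1, 1)
  set a₂ := jka₂ 2 (1, 1)
  set b₁ := jkb₁ 2 (1, 1)
  set b₂ := jkb₂ 2 (1, 1)
  set c30 := gcomm b₂ a₁ with hc30
  set c31 := gcomm b₂ a₂ with hc31
  set c02 := gcomm a₁ b₁ with hc02
  set c03 := gcomm a₁ b₂ with hc03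
  have tri : ∀ i j k : Fin 4,
      gcomm (gcomm (PresentedGroup.of (rels := jkRels 2 (1,1)) i) (PresentedGroup.of j))
        (PresentedGroup.of k) = 1 := jk_triple 2 (1, 1)
  have h30a2 : Commute c30 a₂ := commute_of_gcomm_eq_one (tri 3 0 1)
  have h30b2 : Commute c30 b₂ := commute_of_gcomm_eq_one (tri 3 0 3)
  have h31b2 : Commute c31 b₂ := commute_of_gcomm_eq_one (tri 3 1 3)
  have h02a1 : Commute c02 a₁ := commute_of_gcomm_eq_one (tri 0 2 0)
  have h02b2 : Commute c02 b₂ := commute_of_gcomm_eq_one (tri 0 2 3)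
  have t022 : gcomm c02 b₁ = 1 := tri 0 2 2
  have hA : a₂ * a₁ = a₁ * a₂ := (jk_comm_a 2 (1, 1)).symm.eq
  have r1 : a₁ ^ 2 = c02 := jk_r1 2 (1, 1)
  have r2 : a₂ ^ 2 = gcomm a₁ (b₁ * b₂) := by simpa using jk_r2 2 (1, 1)
  have r4 : b₂ ^ 2 = gcomm a₂ b₂ := jk_r4 2 (1, 1)
  -- derived facts
  have e1 : gcomm a₁ (b₁ * b₂) = c03 * c02 := by
    rw [gcomm_mul_right, ← hc03, ← hc02]
    congr 1
    rw [mul_assoc, h02b2.eq, inv_mul_cancel_left]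
  have e2 : c02 * c02 = 1 := by
    have h := gcomm_mul_left a₁ a₁ b₁
    rw [← hc02] at h
    rw [show a₁ * a₁ = a₁ ^ 2 from (sq a₁).symm, r1, t022] at h
    have h' : a₁⁻¹ * c02 * a₁ = c02 := by
      rw [mul_assoc, h02a1.eq, inv_mul_cancel_left]
    rw [h'] at h
    exact h.symm
  have e3 : Commute c02 c03 := by
    have : c03 = a₁⁻¹ * b₂⁻¹ * a₁ * b₂ := rfl
    rw [this]
    exact ((h02a1.inv_right.mul_right h02b2.inv_right).mul_right h02a1).mul_right h02b2
  have e4 : c30 = c03⁻¹ := by rw [hc30, hc03, gcomm_inv]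
  have e5 : gcomm a₂ b₂ * c31 = 1 := gcomm_mul_gcomm a₂ b₂
  rw [sq]
  calc (a₁ * a₂ * b₂) * (a₁ * a₂ * b₂)
      = a₁ * a₂ * (b₂ * a₁) * a₂ * b₂ := by group
    _ = a₁ * a₂ * (a₁ * b₂ * gcomm b₂ a₁) * a₂ * b₂ := by rw [← mul_comm_gcomm a₁ b₂]
    _ = a₁ * a₂ * a₁ * b₂ * (c30 * a₂) * b₂ := by rw [← hc30]; group
    _ = a₁ * a₂ * a₁ * b₂ * (a₂ * c30) * b₂ := by rw [h30a2.eq]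
    _ = a₁ * a₂ * a₁ * (b₂ * a₂) * (c30 * b₂) := by group
    _ = a₁ * a₂ * a₁ * (a₂ * b₂ * gcomm b₂ a₂) * (c30 * b₂) := by
        rw [← mul_comm_gcomm a₂ b₂]
    _ = a₁ * a₂ * a₁ * (a₂ * b₂ * c31) * (b₂ * c30) := by rw [← hc31, h30b2.eq]
    _ = a₁ * (a₂ * a₁) * a₂ * b₂ * (c31 * b₂) * c30 := by group
    _ = a₁ * (a₁ * a₂) * a₂ * b₂ * (b₂ * c31) * c30 := by rw [hA, h31b2.eq]
    _ = (a₁ * a₁) * (a₂ * a₂) * (b₂ * b₂) * (c31 * c30) := by group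
    _ = a₁ ^ 2 * a₂ ^ 2 * b₂ ^ 2 * (c31 * c30) := by rw [sq, sq, sq]
    _ = c02 * (gcomm a₁ (b₁ * b₂)) * (gcomm a₂ b₂) * (c31 * c30) := by
        rw [r1, r2, r4]
    _ = c02 * (gcomm a₁ (b₁ * b₂)) * ((gcomm a₂ b₂ * c31) * c30) := by group
    _ = c02 * (c03 * c02) * c30 := by rw [e5, e1, one_mul]
    _ = c02 * (c02 * c03) * c30 := by rw [← e3.eq]
    _ = (c02 * c02) * (c03 * c30) := by group
    _ = 1 * (c03 * c03⁻¹) := by rw [e2, e4]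
    _ = 1 := by group

theorem part2 :
    ¬ ∀ φ ψ : JKGroup 2 (1, 1) →* JKGroup 2 (1, 1), φ.comp ψ = ψ.comp φ := by
  intro H
  set w : JKGroup 2 (1, 1) := jka₁ 2 (1, 1) * jka₂ 2 (1, 1) * jkb₂ 2 (1, 1) with hwdef
  have hwp : w ^ 2 = 1 := key2
  set f : Fin 4 → JKGroup 2 (1, 1) := fun i => if i = 2 then w else 1 with hf
  set g : Fin 4 → JKGroup 2 (1, 1) := fun i => if i = 3 then w else 1 with hg
  have hcf : ∀ i j, Commute (f i) (f j) := by
    intro i j; simp only [hf]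
    split_ifs <;>
      first | exact Commute.refl _ | exact Commute.one_left _ | exact Commute.one_right _
  have hpf : ∀ i, f i ^ 2 = 1 := by
    intro i; simp only [hf]; split_ifs
    · exact hwp
    · exact one_pow 2
  have hcg : ∀ i j, Commute (g i) (g j) := by
    intro i j; simp only [hg]
    split_ifs <;>
      first | exact Commute.refl _ | exact Commute.one_left _ | exact Commute.one_right _
  have hpg : ∀ i, g i ^ 2 = 1 := by
    intro i; simp only [hg]; split_ifs
    · exact hwp
    · exact one_pow 2
  set ψ : JKGroup 2 (1, 1) →* JKGroup 2 (1, 1) := PresentedGroup.toGroup (lift_ok hcf hpf)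
  set φ : JKGroup 2 (1, 1) →* JKGroup 2 (1, 1) := PresentedGroup.toGroup (lift_ok hcg hpg)
  have hψ3 : ψ (jkb₁ 2 (1, 1)) = w := by
    rw [show jkb₁ 2 (1, 1) = PresentedGroup.of 2 from rfl, PresentedGroup.toGroup.of]
    simp [hf]
  have hφ3 : φ (jkb₁ 2 (1, 1)) = 1 := by
    rw [show jkb₁ 2 (1, 1) = PresentedGroup.of 2 from rfl, PresentedGroup.toGroup.of]
    simp [hg]
  have hg0 : φ (jka₁ 2 (1, 1)) = 1 := by
    rw [show jka₁ 2 (1, 1) = PresentedGroup.of 0 from rfl, PresentedGroup.toGroup.of]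
    simp [hg]
  have hg1 : φ (jka₂ 2 (1, 1)) = 1 := by
    rw [show jka₂ 2 (1, 1) = PresentedGroup.of 1 from rfl, PresentedGroup.toGroup.of]
    simp [hg]
  have hg3 : φ (jkb₂ 2 (1, 1)) = w := by
    rw [show jkb₂ 2 (1, 1) = PresentedGroup.of 3 from rfl, PresentedGroup.toGroup.of]
    simp [hg]
  have hφw : φ w = w := by
    rw [hwdef, map_mul, map_mul, hg0, hg1, hg3, one_mul, one_mul]
  have hev := DFunLike.congr_fun (H φ ψ) (jkb₁ 2 (1, 1))
  rw [MonoidHom.comp_apply, MonoidHom.comp_apply, hψ3, hφ3, map_one, hφw] at hev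
  -- hev : w = 1
  set ρf : Fin 4 → Multiplicative (ZMod 2) :=
    fun i => if i = 0 then Multiplicative.ofAdd (1 : ZMod 2) else 1 with hρf
  have hcρ : ∀ i j, Commute (ρf i) (ρf j) := fun i j => Commute.all _ _
  have hpρ : ∀ i, ρf i ^ 2 = 1 := by
    intro i; simp only [hρf]; split_ifs
    · rw [← ofAdd_nsmul, nsmul_eq_mul, mul_one, show ((2 : ℕ) : ZMod 2) = 0 from rfl,
        ofAdd_zero]
    · exact one_pow 2
  set ρ : JKGroup 2 (1, 1) →* Multiplicative (ZMod 2) :=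
    PresentedGroup.toGroup (lift_ok hcρ hpρ)
  have hr0 : ρ (jka₁ 2 (1, 1)) = Multiplicative.ofAdd (1 : ZMod 2) := by
    rw [show jka₁ 2 (1, 1) = PresentedGroup.of 0 from rfl, PresentedGroup.toGroup.of]
    simp [hρf]
  have hr1 : ρ (jka₂ 2 (1, 1)) = 1 := by
    rw [show jka₂ 2 (1, 1) = PresentedGroup.of 1 from rfl, PresentedGroup.toGroup.of]
    simp [hρf]
  have hr3 : ρ (jkb₂ 2 (1, 1)) = 1 := by
    rw [show jkb₂ 2 (1, 1) = PresentedGroup.of 3 from rfl, PresentedGroup.toGroup.of]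
    simp [hρf]
  have hρw : ρ w = Multiplicative.ofAdd (1 : ZMod 2) := by
    rw [hwdef, map_mul, map_mul, hr0, hr1, hr3, mul_one, mul_one]
  have : Multiplicative.ofAdd (1 : ZMod 2) = 1 := by rw [← hρw, hev, map_one]
  have h10 : (1 : ZMod 2) = 0 := by simpa using this
  exact one_ne_zero h10

end Part2

theorem stmt_8 :
    (∀ p : ℕ, p.Prime →
      ¬ ∀ φ ψ : JKGroup p (1, 0) →* JKGroup p (1, 0), φ.comp ψ = ψ.comp φ) ∧
    ¬ ∀ φ ψ : JKGroup 2 (1, 1) →* JKGroup 2 (1, 1), φ.comp ψ = ψ.comp φ :=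
  ⟨part1, part2⟩
end

section
/- Let p be a prime and G a finite p-group such that every automorphism of G commutes with every endomorphism of G under composition (α ∘ φ = φ ∘ α for all α ∈ Aut(G), φ ∈ End(G)). Then: (a) the range of every endomorphism of G is a characteristic subgroup of G; (b) every cyclic subgroup of G whose order divides the exponent of the abelianization G/[G,G] is a characteristic subgroup of G; and (c) every element g ∈ G with g^p = 1 lies in the center Z(G). -/
private lemma ppow_dvd_lcm_two {p m a b : ℕ} (hp : p.Prime) (ha : a ≠ 0) (hb : b ≠ 0)
    (h : p ^ m ∣ Nat.lcm a b) : p ^ m ∣ a ∨ p ^ m ∣ b := by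
  rw [Nat.Prime.pow_dvd_iff_le_factorization hp (Nat.lcm_ne_zero ha hb),
    Nat.factorization_lcm ha hb, Finsupp.sup_apply, le_sup_iff] at h
  rcases h with h | h
  · exact Or.inl ((Nat.Prime.pow_dvd_iff_le_factorization hp ha).mpr h)
  · exact Or.inr ((Nat.Prime.pow_dvd_iff_le_factorization hp hb).mpr h)

private lemma ppow_dvd_finset_lcm {p m : ℕ} (hp : p.Prime) {ι : Type*} (s : Finset ι)
    (f : ι → ℕ) (hf : ∀ i ∈ s, f i ≠ 0) (h : p ^ m ∣ s.lcm f) :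
    p ^ m = 1 ∨ ∃ i ∈ s, p ^ m ∣ f i := by
  classical
  induction s using Finset.induction with
  | empty => left; simpa [Nat.dvd_one] using h
  | @insert a s ha ih =>
    rw [Finset.lcm_insert] at h
    have hlcm : s.lcm f ≠ 0 := by
      simp only [Ne, Finset.lcm_eq_zero_iff]
      rintro ⟨i, hi, h0⟩
      exact hf i (Finset.mem_insert_of_mem hi) h0
    rcases ppow_dvd_lcm_two hp (hf a (Finset.mem_insert_self a s)) hlcm h with h1 | h1
    · exact Or.inr ⟨a, Finset.mem_insert_self a s, h1⟩
    · rcases ih (fun i hi => hf i (Finset.mem_insert_of_mem hi)) h1 with h2 | ⟨i, hi, h2⟩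
      · exact Or.inl h2
      · exact Or.inr ⟨i, Finset.mem_insert_of_mem hi, h2⟩

/-- Key construction: if the order of `g` divides the exponent of the abelianization,
then `Subgroup.zpowers g` is the range of an endomorphism of `G`. -/
private lemma exists_endo_range_zpowers (p : ℕ) (hp : p.Prime) (G : Type*) [Group G] [Finite G]
    (hpG : IsPGroup p G) (g : G) (hdvd : orderOf g ∣ Monoid.exponent (Abelianization G)) :
    ∃ φ : G →* G, φ.range = Subgroup.zpowers g := by
  classical
  by_cases hg1 : g = 1
  · refine ⟨1, ?_⟩
    subst hg1
    simp [MonoidHom.range_one, Subgroup.zpowers_one_eq_bot]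
  -- structure theorem for the abelianization
  obtain ⟨ι, _, n, h1, ⟨e⟩⟩ :=
    CommGroup.equiv_prod_multiplicative_zmod_of_finite (Abelianization G)
  have hA : IsPGroup p (Abelianization G) := hpG.to_quotient (commutator G)
  haveI : ∀ i, NeZero (n i) := fun i => ⟨by have := h1 i; omega⟩
  haveI := Fact.mk hp
  -- the order of g is a power of p
  obtain ⟨k0, hk0⟩ := hpG g
  obtain ⟨m, _, hm⟩ := (Nat.dvd_prime_pow hp).mp (orderOf_dvd_of_pow_eq_one hk0)
  -- exponent of abelianization is the lcm of the n i
  have hexp : Monoid.exponent (Abelianization G) = Finset.univ.lcm n := by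
    rw [Monoid.exponent_eq_of_mulEquiv e, Monoid.exponent_pi]
    congr 1
    funext i
    rw [IsCyclic.exponent_eq_card, Nat.card_eq_fintype_card, Fintype.card_multiplicative,
      ZMod.card]
  rw [hexp, hm] at hdvd
  -- find an index i with orderOf g ∣ n i
  have hdisj : p ^ m = 1 ∨ ∃ i ∈ Finset.univ, p ^ m ∣ n i :=
    ppow_dvd_finset_lcm hp _ _ (fun i _ => NeZero.ne (n i)) hdvd
  have hi : ∃ i, orderOf g ∣ n i := by
    rcases hdisj with h | ⟨i, _, h⟩
    · exact absurd (orderOf_eq_one_iff.mp (by rw [hm, h])) hg1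
    · exact ⟨i, hm ▸ h⟩
  obtain ⟨i, hi⟩ := hi
  -- the surjection ψ : G →* Multiplicative (ZMod (n i))
  set ψ : G →* Multiplicative (ZMod (n i)) :=
    (Pi.evalMonoidHom (fun i => Multiplicative (ZMod (n i))) i).comp
      (e.toMonoidHom.comp Abelianization.of) with hψ
  have hψs : Function.Surjective ψ := by
    apply Function.Surjective.comp (Function.surjective_eval i)
    apply Function.Surjective.comp e.surjective
    exact fun b => Quotient.exists_rep b
  -- the homomorphism ρ : Multiplicative (ZMod (n i)) →* G, x ↦ g ^ x.val
  have key : ∀ x y : ℕ, x % (n i) = y % (n i) → g ^ x = g ^ y := by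
    intro x y hxy
    have hx := pow_mod_orderOf g x
    have hy := pow_mod_orderOf g y
    rw [← hx, ← hy, ← Nat.mod_mod_of_dvd x hi, ← Nat.mod_mod_of_dvd y hi, hxy]
  set ρ : Multiplicative (ZMod (n i)) →* G :=
    MonoidHom.mk' (fun x => g ^ (ZMod.val x.toAdd)) (by
      intro a b
      show g ^ ((a.toAdd + b.toAdd).val) = g ^ a.toAdd.val * g ^ b.toAdd.val
      rw [← pow_add]
      apply key
      rw [ZMod.val_add, Nat.mod_mod_of_dvd _ dvd_rfl]) with hρ
  refine ⟨ρ.comp ψ, ?_⟩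
  have hrange : (ρ.comp ψ).range = ρ.range := by
    rw [MonoidHom.range_comp, MonoidHom.range_eq_top.mpr hψs, ← MonoidHom.range_eq_map]
  rw [hrange]
  apply le_antisymm
  · rintro y ⟨x, rfl⟩
    show g ^ (ZMod.val (Multiplicative.toAdd x)) ∈ Subgroup.zpowers g
    exact Subgroup.pow_mem _ (Subgroup.mem_zpowers g) _
  · rw [Subgroup.zpowers_le]
    refine ⟨Multiplicative.ofAdd 1, ?_⟩
    show g ^ (ZMod.val (1 : ZMod (n i))) = g
    rw [ZMod.val_one_eq_one_mod]
    calc g ^ (1 % n i) = g ^ 1 := key (1 % n i) 1 (Nat.mod_mod_of_dvd _ dvd_rfl)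
    _ = g := pow_one g

theorem stmt_11 (p : ℕ) (hp : p.Prime) (G : Type*) [Group G] [Finite G]
    (hpG : IsPGroup p G)
    (hcomm : ∀ (α : MulAut G) (φ : G →* G),
      α.toMonoidHom.comp φ = φ.comp α.toMonoidHom) :
    (∀ φ : G →* G, φ.range.Characteristic) ∧
    (∀ H : Subgroup G, IsCyclic H → Nat.card H ∣ Monoid.exponent (Abelianization G) →
      H.Characteristic) ∧
    (∀ g : G, g ^ p = 1 → g ∈ Subgroup.center G) := by
  have part1 : ∀ φ : G →* G, φ.range.Characteristic := by
    intro φ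
    rw [Subgroup.characteristic_iff_map_eq]
    intro α
    rw [MonoidHom.map_range, hcomm α φ, MonoidHom.range_comp,
      MonoidHom.range_eq_top.mpr α.surjective, ← MonoidHom.range_eq_map]
  refine ⟨part1, ?_, ?_⟩
  · intro H hH hdvd
    obtain ⟨⟨g, hgH⟩, hgen⟩ := hH.exists_generator
    have hHeq : H = Subgroup.zpowers g := by
      apply le_antisymm
      · intro x hx
        obtain ⟨k, hk⟩ := hgen ⟨x, hx⟩
        exact ⟨k, congrArg Subtype.val hk⟩
      · rw [Subgroup.zpowers_le]; exact hgH
    have horder : orderOf g = Nat.card H := by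
      have h2 : orderOf (⟨g, hgH⟩ : H) = Nat.card H := orderOf_eq_card_of_forall_mem_zpowers hgen
      rw [← Subgroup.orderOf_mk g hgH]
      exact h2
    obtain ⟨φ, hφ⟩ := exists_endo_range_zpowers p hp G hpG g (horder ▸ hdvd)
    rw [hHeq, ← hφ]
    exact part1 φ
  · intro g hg
    by_cases hg1 : g = 1
    · subst hg1; exact Subgroup.one_mem _
    -- orderOf g = p
    have horder : orderOf g = p := by
      rcases (Nat.dvd_prime hp).mp (orderOf_dvd_of_pow_eq_one hg) with h | h
      · exact absurd (orderOf_eq_one_iff.mp h) hg1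
      · exact h
    haveI := Fact.mk hp
    haveI : Nontrivial G := ⟨g, 1, hg1⟩
    -- the abelianization is nontrivial since G is a nontrivial nilpotent group
    have hcomm_ne : commutator G ≠ ⊤ := by
      intro htop
      have hnil : Group.IsNilpotent G := hpG.isNilpotent
      obtain ⟨n, hn⟩ := nilpotent_iff_lowerCentralSeries.mp hnil
      have hall : ∀ k, (⊤ : Subgroup G).lowerCentralSeries k = ⊤ := by
        intro k
        induction k with
        | zero => rfl
        | succ k ih =>
          show ⁅(⊤ : Subgroup G).lowerCentralSeries k, ⊤⁆ = ⊤
          rw [ih]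
          exact htop
      have hbot := hall n
      rw [hn] at hbot
      exact absurd ((Subgroup.eq_bot_iff_forall _).mp hbot.symm g (Subgroup.mem_top g)) hg1
    have hAnt : Nontrivial (Abelianization G) := by
      obtain ⟨x, hx⟩ : ∃ x, x ∉ commutator G := by
        by_contra hcon
        push_neg at hcon
        exact hcomm_ne (((Subgroup.eq_top_iff' _).mpr hcon))
      refine ⟨Abelianization.of x, 1, fun hx1 => hx ?_⟩
      exact (QuotientGroup.eq_one_iff x).mp hx1
    -- p divides the exponent of the abelianization
    have hpdvd : p ∣ Monoid.exponent (Abelianization G) := by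
      obtain ⟨a, ha⟩ := exists_ne (1 : Abelianization G)
      have hA : IsPGroup p (Abelianization G) := hpG.to_quotient (commutator G)
      obtain ⟨k, _, hk⟩ := (Nat.dvd_prime_pow hp).mp
        (orderOf_dvd_of_pow_eq_one (hA a).choose_spec)
      have hk1 : 1 ≤ k := by
        rcases Nat.eq_zero_or_pos k with rfl | h
        · exact absurd (orderOf_eq_one_iff.mp (by simpa using hk)) ha
        · exact h
      calc p ∣ p ^ k := dvd_pow_self p (by omega)
      _ = orderOf a := hk.symm
      _ ∣ _ := Monoid.order_dvd_exponent a
    obtain ⟨φ, hφ⟩ := exists_endo_range_zpowers p hp G hpG g (horder ▸ hpdvd)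
    -- g is in the range of φ
    have hgmem : g ∈ φ.range := hφ ▸ Subgroup.mem_zpowers g
    obtain ⟨y, hy⟩ := hgmem
    rw [Subgroup.mem_center_iff]
    intro x
    have h := hcomm (MulAut.conj x) φ
    have happ := congrArg (fun f => f y : (G →* G) → G) h
    simp only [MonoidHom.comp_apply, MulEquiv.coe_toMonoidHom, MulAut.conj_apply, hy] at happ
    -- happ : x * g * x⁻¹ = φ (x * y * x⁻¹)
    have hφx : φ x ∈ Subgroup.zpowers g := hφ ▸ ⟨x, rfl⟩
    obtain ⟨k, hk⟩ := hφx
    have hconj : x * g * x⁻¹ = g := by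
      rw [happ, map_mul, map_mul, map_inv, ← hk, hy]
      group
    calc x * g = (x * g * x⁻¹) * x := by group
    _ = g * x := by rw [hconj]
end

section
/- Let p be a prime and G a finite p-group whose endomorphism monoid End(G) is commutative. Then the range of every endomorphism φ of G is a fully invariant subgroup of G (i.e. ψ maps the range of φ into itself for every endomorphism ψ of G), and every cyclic subgroup of G whose order divides the exponent of the abelianization G/[G,G] is fully invariant. -/
theorem stmt_12 (p : ℕ) (hp : p.Prime) (G : Type*) [Group G] [Finite G]
    (hpG : IsPGroup p G)
    (hcomm : ∀ φ ψ : G →* G, φ.comp ψ = ψ.comp φ) :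
    (∀ φ ψ : G →* G, φ.range.map ψ ≤ φ.range) ∧
    (∀ H : Subgroup G, IsCyclic H → Nat.card H ∣ Monoid.exponent (Abelianization G) →
      ∀ ψ : G →* G, H.map ψ ≤ H) := by
  haveI : Fact p.Prime := ⟨hp⟩
  have part1 : ∀ φ ψ : G →* G, φ.range.map ψ ≤ φ.range := by
    intro φ ψ x hx
    simp only [Subgroup.mem_map, MonoidHom.mem_range] at hx ⊢
    obtain ⟨y, ⟨z, rfl⟩, rfl⟩ := hx
    refine ⟨ψ z, ?_⟩
    have := congrArg (fun f : G →* G => f z) (hcomm φ ψ)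
    simpa using this
  refine ⟨part1, ?_⟩
  intro H hcyc hdvd ψ
  rcases eq_or_ne (Nat.card H) 1 with h1 | h1
  · have hbot : H = ⊥ := Subgroup.eq_bot_of_card_eq _ h1
    subst hbot
    simp
  -- generator of H
  obtain ⟨⟨g, hgH⟩, hgen⟩ := hcyc.exists_generator
  have hHg : Subgroup.zpowers g = H := by
    apply le_antisymm (Subgroup.zpowers_le.mpr hgH)
    intro x hx
    obtain ⟨k, hk⟩ := hgen ⟨x, hx⟩
    exact ⟨k, congrArg Subtype.val hk⟩
  set d := Nat.card H with hd
  have hog : orderOf g = d := by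
    have h2 : orderOf (⟨g, hgH⟩ : H) = Nat.card H :=
      orderOf_eq_card_of_forall_mem_zpowers hgen
    rw [hd, ← h2]
    exact orderOf_injective H.subtype Subtype.coe_injective ⟨g, hgH⟩
  have hd0 : d ≠ 0 := Nat.card_pos.ne'
  haveI : NeZero d := ⟨hd0⟩
  have hd1 : 1 < d := by omega
  -- d is a p-power, d = p ^ k with k ≥ 1
  obtain ⟨m, hcardG⟩ := IsPGroup.iff_card.mp hpG
  have hdH : d ∣ p ^ m := hcardG ▸ Subgroup.card_subgroup_dvd_card H
  obtain ⟨k, hk_le, hdk⟩ := (Nat.dvd_prime_pow hp).mp hdH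
  have hk0 : k ≠ 0 := by
    rintro rfl
    simp [hdk] at h1
  -- decomposition of the abelianization
  obtain ⟨ι, _, n, hn1, ⟨e⟩⟩ :=
    CommGroup.equiv_prod_multiplicative_zmod_of_finite (Abelianization G)
  have hpA : IsPGroup p (Abelianization G) := hpG.to_quotient (commutator G)
  obtain ⟨l, hcardA⟩ := IsPGroup.iff_card.mp hpA
  have hni : ∀ i, n i ∣ p ^ l := by
    intro i
    have hcardA' : Nat.card (Abelianization G) = ∏ j, n j := by
      rw [Nat.card_congr e.toEquiv, Nat.card_pi]
      refine Finset.prod_congr rfl fun j _ => ?_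
      rw [Nat.card_congr Multiplicative.toAdd, Nat.card_zmod]
    rw [← hcardA, hcardA']
    exact Finset.dvd_prod_of_mem n (Finset.mem_univ i)
  -- there is a component of order divisible by d
  have hex : ∃ i, d ∣ n i := by
    by_contra hcon
    push_neg at hcon
    have hsm : ∀ i, n i ∣ p ^ (k - 1) := by
      intro i
      obtain ⟨j, hj_le, hj⟩ := (Nat.dvd_prime_pow hp).mp (hni i)
      rw [hj]
      apply pow_dvd_pow
      by_contra hjk
      exact hcon i (by rw [hdk, hj]; exact pow_dvd_pow p (by omega))
    have hexp : Monoid.exponent (Abelianization G) ∣ p ^ (k - 1) := by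
      apply Monoid.exponent_dvd_of_forall_pow_eq_one
      intro a
      apply e.injective
      rw [map_pow, map_one]
      funext i
      rw [Pi.pow_apply, Pi.one_apply]
      obtain ⟨c, hc⟩ := hsm i
      have hbase : (e a i) ^ (n i) = 1 := by
        have h0 : Multiplicative.toAdd ((e a i) ^ (n i))
            = Multiplicative.toAdd (1 : Multiplicative (ZMod (n i))) := by
          rw [toAdd_pow, toAdd_one]
          simp [nsmul_eq_mul, ZMod.natCast_self]
        exact Multiplicative.toAdd.injective h0
      rw [hc, pow_mul, hbase, one_pow]
    have : (p : ℕ) ^ k ∣ p ^ (k - 1) := hdk ▸ hdvd.trans hexp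
    have hle := (Nat.pow_dvd_pow_iff_le_right hp.one_lt).mp this
    omega
  obtain ⟨i, hi⟩ := hex
  -- the homomorphism Multiplicative (ZMod d) →* G, x ↦ g ^ x.val
  have hf2mul : ∀ x y : Multiplicative (ZMod d),
      g ^ (Multiplicative.toAdd (x * y)).val
        = g ^ (Multiplicative.toAdd x).val * g ^ (Multiplicative.toAdd y).val := by
    intro x y
    rw [← pow_add]
    have : Multiplicative.toAdd (x * y) = Multiplicative.toAdd x + Multiplicative.toAdd y := rfl
    rw [this, ZMod.val_add]
    conv_rhs => rw [← pow_mod_orderOf]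
    rw [hog]
  let f₂ : Multiplicative (ZMod d) →* G :=
    { toFun := fun x => g ^ (Multiplicative.toAdd x).val
      map_one' := by simp
      map_mul' := hf2mul }
  have hf2one : f₂ (Multiplicative.ofAdd (1 : ZMod d)) = g := by
    show g ^ (ZMod.val (1 : ZMod d)) = g
    rw [ZMod.val_one_eq_one_mod, Nat.mod_eq_of_lt hd1, pow_one]
  -- the surjection Abelianization G →* Multiplicative (ZMod d)
  let castm : Multiplicative (ZMod (n i)) →* Multiplicative (ZMod d) :=
    AddMonoidHom.toMultiplicative ((ZMod.castHom hi (ZMod d)).toAddMonoidHom)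
  let proj : (∀ j, Multiplicative (ZMod (n j))) →* Multiplicative (ZMod (n i)) :=
    Pi.evalMonoidHom (fun j => Multiplicative (ZMod (n j))) i
  let f₁ : Abelianization G →* Multiplicative (ZMod d) :=
    castm.comp (proj.comp e.toMonoidHom)
  have hf₁surj : Function.Surjective (f₁.comp (Abelianization.of (G := G))) := by
    have h4 : Function.Surjective (Abelianization.of (G := G)) := fun x =>
      Quotient.inductionOn x fun a => ⟨a, rfl⟩
    have h3 : Function.Surjective e := e.surjective
    have h2 : Function.Surjective proj := Function.surjective_eval i
    have h1 : Function.Surjective castm := by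
      intro z
      obtain ⟨c, hc⟩ := ZMod.intCast_surjective (Multiplicative.toAdd z)
      refine ⟨Multiplicative.ofAdd ((c : ZMod (n i))), ?_⟩
      show Multiplicative.ofAdd ((ZMod.castHom hi (ZMod d)) ((c : ZMod (n i)))) = z
      rw [map_intCast, hc, ofAdd_toAdd]
    exact (h1.comp ((h2.comp h3).comp h4))
  -- assemble the endomorphism with range H
  let φ : G →* G := f₂.comp (f₁.comp (Abelianization.of (G := G)))
  have hrange : φ.range = H := by
    apply le_antisymm
    · rintro x ⟨y, rfl⟩
      rw [← hHg]
      exact Subgroup.pow_mem _ (Subgroup.mem_zpowers g) _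
    · rw [← hHg]
      apply Subgroup.zpowers_le.mpr
      obtain ⟨y, hy⟩ := hf₁surj (Multiplicative.ofAdd (1 : ZMod d))
      exact ⟨y, by rw [MonoidHom.comp_apply, hy, hf2one]⟩
  calc H.map ψ = φ.range.map ψ := by rw [hrange]
    _ ≤ φ.range := part1 φ ψ
    _ = H := hrange
end

section
/- Let p be a prime and G a finite p-group such that every automorphism of G commutes with every endomorphism of G under composition. Then G cannot be written as a nontrivial internal semidirect product: there do not exist subgroups N, H of G with N normal in G, N ≠ {1}, H ≠ {1}, N ∩ H = {1}, and N·H = G. -/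
private lemma proj_exists {G : Type*} [Group G] (A B : Subgroup G) [A.Normal]
    (hAB : A ⊓ B = ⊥) (hgen : ∀ g : G, ∃ a ∈ A, ∃ b ∈ B, g = a * b) :
    ∃ π : G →* G, (∀ a ∈ A, π a = 1) ∧ (∀ b ∈ B, π b = b) ∧ (∀ g, π g ∈ B) := by
  let q := QuotientGroup.mk' A
  let r : B →* G ⧸ A := q.comp B.subtype
  have hq1 : ∀ a ∈ A, q a = 1 := fun a ha => (QuotientGroup.eq_one_iff a).mpr ha
  have hinj : Function.Injective r := by
    intro b₁ b₂ h
    have hA : ((b₁ : G))⁻¹ * (b₂ : G) ∈ A := by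
      rw [← QuotientGroup.eq]
      exact h
    have hB : ((b₁ : G))⁻¹ * (b₂ : G) ∈ B := B.mul_mem (B.inv_mem b₁.2) b₂.2
    have h1 : ((b₁ : G))⁻¹ * (b₂ : G) = 1 := by
      have := Subgroup.mem_inf.mpr ⟨hA, hB⟩
      rw [hAB, Subgroup.mem_bot] at this
      exact this
    rw [inv_mul_eq_one] at h1
    exact Subtype.ext h1
  have hsurj : Function.Surjective r := by
    intro x
    obtain ⟨g, rfl⟩ := QuotientGroup.mk'_surjective A x
    obtain ⟨a, ha, b, hb, rfl⟩ := hgen g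
    refine ⟨⟨b, hb⟩, ?_⟩
    show q b = q (a * b)
    rw [map_mul, hq1 a ha, one_mul]
  let e := MulEquiv.ofBijective r ⟨hinj, hsurj⟩
  refine ⟨B.subtype.comp ((e.symm : G ⧸ A →* B).comp q), ?_, ?_, ?_⟩
  · intro a ha
    show ((e.symm (q a) : B) : G) = 1
    rw [hq1 a ha, map_one, OneMemClass.coe_one]
  · intro b hb
    show ((e.symm (q b) : B) : G) = b
    have : e ⟨b, hb⟩ = q b := rfl
    rw [← this, MulEquiv.symm_apply_apply]
  · intro g
    exact (e.symm (q g)).2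

private def zpowHom {G : Type*} [Group G] (z : G) (n : ℕ) [NeZero n] (hz : z ^ n = 1) :
    Multiplicative (ZMod n) →* G where
  toFun k := z ^ (Multiplicative.toAdd k).val
  map_one' := by
    show z ^ (0 : ZMod n).val = 1
    rw [ZMod.val_zero, pow_zero]
  map_mul' a b := by
    have hmod : ∀ m : ℕ, z ^ (m % n) = z ^ m := fun m => by
      conv_rhs => rw [← Nat.div_add_mod m n]
      rw [pow_add, pow_mul, hz, one_pow, one_mul]
    show z ^ ((Multiplicative.toAdd a + Multiplicative.toAdd b).val) = _
    rw [ZMod.val_add, hmod, pow_add]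

theorem stmt_13 (p : ℕ) (hp : p.Prime) (G : Type*) [Group G] [Finite G]
    (hpG : IsPGroup p G)
    (hcomm : ∀ (α : MulAut G) (φ : G →* G),
      α.toMonoidHom.comp φ = φ.comp α.toMonoidHom) :
    ¬ ∃ N H : Subgroup G, N.Normal ∧ N ≠ ⊥ ∧ H ≠ ⊥ ∧ N ⊓ H = ⊥ ∧
      (∀ g : G, ∃ n ∈ N, ∃ h ∈ H, g = n * h) := by
  haveI : Fact p.Prime := ⟨hp⟩
  rintro ⟨N, H, hNnorm, hNbot, hHbot, hNH, hgen⟩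
  haveI := hNnorm
  obtain ⟨π₁, hπ₁N, hπ₁H, hπ₁mem⟩ := proj_exists N H hNH hgen
  have hcomm' : ∀ (α : MulAut G) (φ : G →* G) (x : G),
      α.toMonoidHom (φ x) = φ (α.toMonoidHom x) := by
    intro α φ x
    have := DFunLike.congr_fun (hcomm α φ) x
    simpa using this
  -- N and H commute elementwise
  have hc : ∀ n ∈ N, ∀ h ∈ H, n * h = h * n := by
    intro n hn h hh
    have key := hcomm' (MulAut.conj n) π₁ h
    have h1 : (MulAut.conj n).toMonoidHom (π₁ h) = n * h * n⁻¹ := by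
      rw [hπ₁H h hh]; rfl
    have h2 : π₁ ((MulAut.conj n).toMonoidHom h) = h := by
      show π₁ (n * h * n⁻¹) = h
      rw [map_mul, map_mul, map_inv, hπ₁N n hn, hπ₁H h hh, one_mul, inv_one, mul_one]
    rw [h1, h2] at key
    exact mul_inv_eq_iff_eq_mul.mp key
  -- H is normal
  haveI hHnorm : H.Normal := by
    constructor
    intro h hh g
    obtain ⟨a, ha, b, hb, rfl⟩ := hgen g
    have hbh : b * h * b⁻¹ ∈ H := H.mul_mem (H.mul_mem hb hh) (H.inv_mem hb)
    have hca : a * (b * h * b⁻¹) = (b * h * b⁻¹) * a := hc a ha _ hbh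
    have : a * b * h * (a * b)⁻¹ = b * h * b⁻¹ := by
      rw [mul_inv_rev, show a * b * h * (b⁻¹ * a⁻¹) = a * (b * h * b⁻¹) * a⁻¹ by group, hca]
      group
    rw [this]
    exact hbh
  -- decomposition in the other order
  have hgen' : ∀ g : G, ∃ b ∈ H, ∃ a ∈ N, g = b * a := by
    intro g
    obtain ⟨a, ha, b, hb, rfl⟩ := hgen g
    exact ⟨b, hb, a, ha, (hc a ha b hb)⟩
  obtain ⟨π₂, hπ₂H, hπ₂N, hπ₂mem⟩ := proj_exists H N (by rw [inf_comm]; exact hNH) hgen'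
  -- a central element z of order p inside N
  haveI : Nontrivial N := (Subgroup.nontrivial_iff_ne_bot N).mpr hNbot
  have hNgrp : IsPGroup p N := hpG.to_subgroup N
  haveI : Nontrivial (Subgroup.center ↥N) := hNgrp.center_nontrivial
  have hdvd : p ∣ Nat.card (Subgroup.center ↥N) := by
    refine ((hNgrp.to_subgroup (Subgroup.center ↥N)).card_eq_or_dvd).resolve_left ?_
    exact Finite.one_lt_card.ne'
  obtain ⟨ζ, hζ⟩ := exists_prime_orderOf_dvd_card' p hdvd
  set z : G := ((ζ : ↥N) : G) with hzdef
  have hzN : z ∈ N := (ζ : ↥N).2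
  have hzne : z ≠ 1 := by
    intro h
    have h1 : (ζ : ↥N) = 1 := Subtype.ext h
    have h2 : ζ = 1 := Subtype.ext h1
    rw [h2, orderOf_one] at hζ
    exact hp.one_lt.ne' hζ.symm
  have hzp : z ^ p = 1 := by
    have h0 : ζ ^ p = 1 := by rw [← hζ]; exact pow_orderOf_eq_one ζ
    have := congrArg (fun x : Subgroup.center ↥N => ((x : ↥N) : G)) h0
    simpa using this
  have hzc : ∀ g : G, z * g = g * z := by
    intro g
    obtain ⟨a, ha, b, hb, rfl⟩ := hgen g
    have h1 : z * a = a * z := by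
      have := ζ.2
      rw [Subgroup.mem_center_iff] at this
      have h2 := this ⟨a, ha⟩
      have : ((⟨a, ha⟩ * (ζ : ↥N) : ↥N) : G) = (((ζ : ↥N) * ⟨a, ha⟩ : ↥N) : G) := by rw [h2]
      simpa using this.symm
    have h2 : z * b = b * z := hc z hzN b hb
    rw [← mul_assoc, h1, mul_assoc, h2, ← mul_assoc]
  -- a maximal subgroup M of H, with quotient of order p
  haveI : Nontrivial H := (Subgroup.nontrivial_iff_ne_bot H).mpr hHbot
  have hHgrp : IsPGroup p H := hpG.to_subgroup H
  haveI : Group.IsNilpotent ↥H := hHgrp.isNilpotent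
  haveI : Finite (Subgroup ↥H) := Finite.of_injective _ SetLike.coe_injective
  obtain ⟨M, hM⟩ : ∃ M : Subgroup ↥H, IsCoatom M := by
    rcases eq_top_or_exists_le_coatom (⊥ : Subgroup ↥H) with h | ⟨M, hM, _⟩
    · exact absurd h bot_ne_top
    · exact ⟨M, hM⟩
  haveI hMnorm : M.Normal := Subgroup.NormalizerCondition.normal_of_coatom M
    normalizerCondition_of_isNilpotent hM
  have hCp : IsPGroup p (↥H ⧸ M) := hHgrp.to_quotient M
  haveI : Nontrivial (↥H ⧸ M) := by
    obtain ⟨x, -, hx⟩ := SetLike.exists_of_lt hM.1.lt_top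
    refine ⟨QuotientGroup.mk' M x, 1, fun h => hx ?_⟩
    exact (QuotientGroup.eq_one_iff x).mp h
  have hsub : ∀ K : Subgroup (↥H ⧸ M), K = ⊥ ∨ K = ⊤ := by
    intro K
    have hle : M ≤ K.comap (QuotientGroup.mk' M) := by
      intro m hm
      have h1 : (QuotientGroup.mk' M) m = 1 := (QuotientGroup.eq_one_iff m).mpr hm
      rw [Subgroup.mem_comap, h1]
      exact K.one_mem
    rcases hle.lt_or_eq with hlt | heq
    · right
      have htop := hM.2 _ hlt
      rw [← Subgroup.map_comap_eq_self_of_surjective (QuotientGroup.mk'_surjective M) K,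
        htop]
      exact Subgroup.map_top_of_surjective _ (QuotientGroup.mk'_surjective M)
    · left
      rw [← Subgroup.map_comap_eq_self_of_surjective (QuotientGroup.mk'_surjective M) K,
        ← heq]
      rw [eq_bot_iff]
      rintro x ⟨m, hm, rfl⟩
      rw [Subgroup.mem_bot]
      exact (QuotientGroup.eq_one_iff m).mpr hm
  have hdvdC : p ∣ Nat.card (↥H ⧸ M) := hCp.card_eq_or_dvd.resolve_left Finite.one_lt_card.ne'
  obtain ⟨c, hc_ord⟩ := exists_prime_orderOf_dvd_card' p hdvdC
  have hcne : c ≠ 1 := by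
    intro h
    rw [h, orderOf_one] at hc_ord
    exact hp.one_lt.ne' hc_ord.symm
  have hcard : Nat.card (↥H ⧸ M) = p := by
    have hzpow : Subgroup.zpowers c = ⊤ :=
      (hsub _).resolve_left (fun h => hcne (Subgroup.zpowers_eq_bot.mp h))
    calc Nat.card (↥H ⧸ M) = Nat.card (⊤ : Subgroup (↥H ⧸ M)) :=
          (Nat.card_congr Subgroup.topEquiv.toEquiv).symm
      _ = Nat.card (Subgroup.zpowers c) := by rw [hzpow]
      _ = orderOf c := Nat.card_zpowers c
      _ = p := hc_ord
  haveI : IsCyclic (↥H ⧸ M) := isCyclic_of_prime_card hcard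
  haveI : NeZero (Nat.card (↥H ⧸ M)) := ⟨by rw [hcard]; exact hp.ne_zero⟩
  haveI : Fact (1 < Nat.card (↥H ⧸ M)) := ⟨by rw [hcard]; exact hp.one_lt⟩
  have hzn : z ^ (Nat.card (↥H ⧸ M)) = 1 := by rw [hcard]; exact hzp
  let e := zmodCyclicMulEquiv (inferInstance : IsCyclic (↥H ⧸ M))
  let ψ : (↥H ⧸ M) →* G := (zpowHom z (Nat.card (↥H ⧸ M)) hzn).comp (e.symm : _ →* _)
  let ρ : G →* ↥H := π₁.codRestrict H hπ₁mem
  let φ₂ : G →* G := ψ.comp ((QuotientGroup.mk' M).comp ρ)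
  have hφ₂pow : ∀ g : G, ∃ k : ℕ, φ₂ g = z ^ k := fun g => ⟨_, rfl⟩
  have hφ₂N : ∀ g : G, φ₂ g ∈ N := by
    intro g
    obtain ⟨k, hk⟩ := hφ₂pow g
    rw [hk]
    exact N.pow_mem hzN k
  have hφ₂c : ∀ g x : G, φ₂ g * x = x * φ₂ g := by
    intro g x
    obtain ⟨k, hk⟩ := hφ₂pow g
    rw [hk]
    exact Commute.pow_left (hzc x) k
  have hφ₂triv : ∀ a ∈ N, φ₂ a = 1 := by
    intro a ha
    have hρ : ρ a = 1 := Subtype.ext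
      (by show π₁ a = ((1 : ↥H) : G); rw [hπ₁N a ha, OneMemClass.coe_one])
    show ψ ((QuotientGroup.mk' M) (ρ a)) = 1
    rw [hρ, map_one, map_one]
  obtain ⟨h₁, hh₁⟩ := QuotientGroup.mk'_surjective M (e (Multiplicative.ofAdd 1))
  have hφ₂g₀ : φ₂ (h₁ : G) = z := by
    have hρ : ρ (h₁ : G) = h₁ := Subtype.ext
      (show π₁ (h₁ : G) = (h₁ : G) from hπ₁H (h₁ : G) h₁.2)
    show ψ ((QuotientGroup.mk' M) (ρ (h₁ : G))) = z
    rw [hρ, hh₁]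
    show (zpowHom z (Nat.card (↥H ⧸ M)) hzn) (e.symm (e (Multiplicative.ofAdd 1))) = z
    rw [MulEquiv.symm_apply_apply]
    show z ^ (Multiplicative.toAdd (Multiplicative.ofAdd (1 : ZMod (Nat.card (↥H ⧸ M))))).val = z
    rw [toAdd_ofAdd, ZMod.val_one, pow_one]
  -- the shear automorphism
  let α : MulAut G :=
    { toFun := fun g => g * φ₂ g
      invFun := fun g => g * (φ₂ g)⁻¹
      left_inv := by
        intro g
        show g * φ₂ g * (φ₂ (g * φ₂ g))⁻¹ = g
        rw [map_mul, hφ₂triv _ (hφ₂N g), mul_one, mul_inv_cancel_right]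
      right_inv := by
        intro g
        show g * (φ₂ g)⁻¹ * φ₂ (g * (φ₂ g)⁻¹) = g
        rw [map_mul, map_inv, hφ₂triv _ (hφ₂N g), inv_one, mul_one, inv_mul_cancel_right]
      map_mul' := by
        intro x y
        show (x * y) * φ₂ (x * y) = (x * φ₂ x) * (y * φ₂ y)
        rw [map_mul]
        simp only [mul_assoc]
        congr 1
        rw [← mul_assoc, ← hφ₂c x y, mul_assoc] }
  -- final contradiction
  have hfin := hcomm' α π₂ (h₁ : G)
  have hαh : α.toMonoidHom (h₁ : G) = (h₁ : G) * z := by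
    show (h₁ : G) * φ₂ (h₁ : G) = (h₁ : G) * z
    rw [hφ₂g₀]
  rw [hπ₂H (h₁ : G) h₁.2, hαh, map_mul, hπ₂H (h₁ : G) h₁.2, one_mul,
    hπ₂N z hzN] at hfin
  rw [map_one] at hfin
  exact hzne hfin.symm
end

section
/- Let p be a prime and G a finite p-group such that every automorphism of G commutes with every endomorphism of G under composition. Then every endomorphism φ of G is either an automorphism (bijective) or nilpotent, i.e. there exists a positive integer n such that the n-fold composition φ^n is the trivial endomorphism sending every element of G to the identity. -/
lemma aux_exists_idem_pow {M : Type*} [Monoid M] [Finite M] (x : M) :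
    ∃ n, 0 < n ∧ x ^ n * x ^ n = x ^ n := by
  obtain ⟨a, b, hne, hab⟩ := Finite.exists_ne_map_eq_of_infinite (fun n : ℕ => x ^ n)
  wlog hlt : a < b generalizing a b
  · exact this b a hne.symm hab.symm (by omega)
  set d := b - a with hd
  have hd0 : 0 < d := by omega
  have key : ∀ m, a ≤ m → x ^ (m + d) = x ^ m := by
    intro m hm
    have : x ^ (m + d) = x ^ (m - a) * x ^ b := by
      rw [← pow_add]; congr 1; omega
    rw [this, ← hab, ← pow_add]
    congr 1; omega
  have key2 : ∀ k m, a ≤ m → x ^ (m + k * d) = x ^ m := by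
    intro k
    induction k with
    | zero => simp
    | succ k ih =>
      intro m hm
      have : m + (k + 1) * d = (m + d) + k * d := by ring
      rw [this, ih _ (by omega), key _ hm]
  refine ⟨(a + 1) * d, by positivity, ?_⟩
  rw [← pow_add]
  exact key2 (a + 1) ((a + 1) * d) (by nlinarith)

theorem stmt_14 (p : ℕ) (hp : p.Prime) (G : Type*) [Group G] [Finite G]
    (hpG : IsPGroup p G)
    (hcomm : ∀ (α : MulAut G) (φ : G →* G),
      α.toMonoidHom.comp φ = φ.comp α.toMonoidHom) :
    ∀ φ : G →* G, Function.Bijective φ ∨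
      ∃ n : ℕ, 0 < n ∧ ∀ g : G, (⇑φ)^[n] g = 1 := by
  intro φ
  haveI : Fact p.Prime := ⟨hp⟩
  haveI : Finite (Monoid.End G) := Finite.of_injective _ DFunLike.coe_injective
  obtain ⟨n, hn, hidem⟩ := aux_exists_idem_pow (M := Monoid.End G) φ
  let φE : Monoid.End G := φ
  let ψ : G →* G := φE ^ n
  have hiter : ∀ g, ψ g = (⇑φ)^[n] g := fun g => congrFun (Monoid.End.coe_pow (M := G) φE n) g
  have hψψ : ∀ g, ψ (ψ g) = ψ g := fun g => DFunLike.congr_fun hidem g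
  by_cases hsurj : Function.Surjective ψ
  · left
    obtain ⟨k, rfl⟩ := Nat.exists_eq_succ_of_ne_zero hn.ne'
    have h2 : Function.Surjective (⇑φ ∘ (⇑φ)^[k]) := by
      rw [← Function.iterate_succ']
      intro y
      obtain ⟨x, hx⟩ := hsurj y
      exact ⟨x, by rw [← hiter x, hx]⟩
    have hs : Function.Surjective φ := h2.of_comp
    exact ⟨Finite.injective_iff_surjective.mpr hs, hs⟩
  by_cases htriv : ∀ g : G, ψ g = 1
  · right
    exact ⟨n, hn, fun g => by rw [← hiter g]; exact htriv g⟩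
  exfalso
  push_neg at htriv
  -- conjugation commutes with ψ
  have hconj : ∀ g x : G, ψ (g * x * g⁻¹) = g * ψ x * g⁻¹ := by
    intro g x
    have h := DFunLike.congr_fun (hcomm (MulAut.conj g) ψ) x
    simpa [MulAut.conj_apply] using h.symm
  set K := ψ.ker with hKdef
  have hrange_normal : ψ.range.Normal := by
    constructor
    rintro x ⟨y, rfl⟩ g
    exact ⟨g * y * g⁻¹, hconj g y⟩
  have hdisj : Disjoint ψ.range K := by
    rw [Subgroup.disjoint_def]
    rintro x ⟨y, rfl⟩ hk
    have : ψ (ψ y) = 1 := hk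
    rwa [hψψ] at this
  have hKne_bot : K ≠ ⊥ := by
    intro hbot
    have hinj : Function.Injective ψ := by
      rw [← MonoidHom.ker_eq_bot_iff]; exact hbot
    exact hsurj (Finite.injective_iff_surjective.mp hinj)
  -- central element z of order p inside K
  haveI : Nontrivial K := by
    rw [Subgroup.nontrivial_iff_ne_bot]; exact hKne_bot
  have hKp : IsPGroup p K := hpG.to_subgroup K
  haveI := hKp.center_nontrivial
  obtain ⟨z₀, hz₀⟩ := exists_ne (1 : Subgroup.center (K : Subgroup G))
  set z₁ : K := (z₀ : K) with hz₁def
  have hz₁ne : z₁ ≠ 1 := fun h => hz₀ (Subtype.ext h)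
  obtain ⟨k, hk⟩ := hKp z₁
  have hdvd : orderOf z₁ ∣ p ^ k := orderOf_dvd_of_pow_eq_one hk
  obtain ⟨j, hjk, hoj⟩ := (Nat.dvd_prime_pow hp).mp hdvd
  have hj0 : j ≠ 0 := by
    rintro rfl
    rw [pow_zero, orderOf_eq_one_iff] at hoj
    exact hz₁ne hoj
  set z₂ : K := z₁ ^ (p ^ (j - 1)) with hz₂def
  have hz₂ord : orderOf z₂ = p := by
    rw [hz₂def, orderOf_pow, hoj, Nat.gcd_comm, Nat.gcd_eq_left (pow_dvd_pow p (by omega))]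
    rw [show j = (j - 1) + 1 by omega, pow_succ, Nat.add_sub_cancel, Nat.mul_div_cancel_left _ (pow_pos hp.pos _)]
  have hz₂cen : z₂ ∈ Subgroup.center K := (Subgroup.center K).pow_mem z₀.2 _
  set zG : G := ((z₂ : K) : G) with hzGdef
  have hzGord : orderOf zG = p := by
    rw [← hz₂ord]
    exact orderOf_injective K.subtype Subtype.coe_injective z₂
  have hzGne : zG ≠ 1 := by
    intro h
    rw [h, orderOf_one] at hzGord
    exact hp.one_lt.ne' hzGord.symm
  have hzGK : zG ∈ K := z₂.2
  have hzcomm : ∀ x : G, Commute zG x := by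
    intro x
    have h1 : Commute zG (ψ x) :=
      (Subgroup.commute_of_normal_of_disjoint ψ.range K hrange_normal (MonoidHom.normal_ker ψ)
        hdisj (ψ x) zG ⟨x, rfl⟩ hzGK).symm
    have hkmem : (ψ x)⁻¹ * x ∈ K := by
      have : ψ ((ψ x)⁻¹ * x) = 1 := by
        rw [map_mul, map_inv, hψψ, inv_mul_cancel]
      exact this
    have h2 : Commute zG ((ψ x)⁻¹ * x) := by
      have := hz₂cen.comm (⟨(ψ x)⁻¹ * x, hkmem⟩ : K)
      have h3 := congrArg (Subtype.val) this
      exact h3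
    have := (h1.mul_right h2)
    rwa [mul_inv_cancel_left] at this
  -- quotient by K
  haveI hKnormal : K.Normal := MonoidHom.normal_ker ψ
  haveI : Finite (G ⧸ K) := Quotient.finite _
  haveI : Nontrivial (G ⧸ K) := by
    obtain ⟨g, hg⟩ := htriv
    refine ⟨⟨(g : G ⧸ K), 1, fun h => ?_⟩⟩
    exact hg ((QuotientGroup.eq_one_iff g).mp h)
  have hQp : IsPGroup p (G ⧸ K) := hpG.to_quotient K
  obtain ⟨m, hm0, hmcard⟩ := hQp.nontrivial_iff_card.mp inferInstance
  obtain ⟨M, hMcard⟩ := Sylow.exists_subgroup_card_pow_prime (G := G ⧸ K) p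
    (n := m - 1) (by rw [hmcard]; exact pow_dvd_pow p (by omega))
  have hMindex : M.index = p := by
    have h1 := M.card_mul_index
    rw [hMcard, hmcard] at h1
    have h2 : p ^ (m - 1) * M.index = p ^ (m - 1) * p := by
      rw [h1, ← pow_succ]; congr 1; omega
    exact Nat.eq_of_mul_eq_mul_left (pow_pos hp.pos _) h2
  have hMne_top : M ≠ ⊤ := by
    intro h
    rw [h, Subgroup.index_top] at hMindex
    exact hp.one_lt.ne' hMindex.symm
  haveI : Group.IsNilpotent (G ⧸ K) := hQp.isNilpotent
  have hcoatom : IsCoatom M := by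
    refine ⟨hMne_top, fun N hMN => ?_⟩
    have hle : M ≤ N := le_of_lt hMN
    have hrel := Subgroup.relIndex_mul_index hle
    rw [hMindex] at hrel
    rcases hp.eq_one_or_self_of_dvd N.index ⟨M.relIndex N, by rw [← hrel]; ring⟩ with h | h
    · exact Subgroup.index_eq_one.mp h
    · exfalso
      have hrel1 : M.relIndex N = 1 := by
        rw [h] at hrel
        have := Nat.eq_of_mul_eq_mul_right hp.pos (hrel.trans (one_mul p).symm)
        exact this
      have hNM : N ≤ M := Subgroup.relIndex_eq_one.mp hrel1
      exact (lt_irrefl _ (lt_of_lt_of_le hMN hNM))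
  haveI hMnormal : M.Normal :=
    Subgroup.NormalizerCondition.normal_of_coatom M normalizerCondition_of_isNilpotent hcoatom
  have hcardQM : Nat.card ((G ⧸ K) ⧸ M) = p := by
    rw [← Subgroup.index_eq_card, hMindex]
  have hcardz : Nat.card (Subgroup.zpowers zG) = p := by
    rw [Nat.card_zpowers, hzGord]
  let e := mulEquivOfPrimeCardEq hcardQM hcardz
  let f : G →* G := (Subgroup.zpowers zG).subtype.comp
    (e.toMonoidHom.comp ((QuotientGroup.mk' M).comp (QuotientGroup.mk' K)))
  have hfz : ∀ x, f x ∈ Subgroup.zpowers zG := fun x => (e _).2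
  have hfK : ∀ x ∈ K, f x = 1 := by
    intro x hx
    show ((e ((QuotientGroup.mk' M) ((QuotientGroup.mk' K) x)) : Subgroup.zpowers zG) : G) = 1
    have h1 : (QuotientGroup.mk' K) x = (1 : G ⧸ K) := (QuotientGroup.eq_one_iff x).mpr hx
    rw [h1, map_one, map_one, OneMemClass.coe_one]
  have hfcomm : ∀ x y : G, Commute (f x) y := by
    intro x y
    obtain ⟨c, hc⟩ := Subgroup.mem_zpowers_iff.mp (hfz x)
    rw [← hc]
    exact (hzcomm y).zpow_left c
  let α : G →* G := MonoidHom.mk' (fun x => x * f x) (by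
    intro a b
    show a * b * f (a * b) = (a * f a) * (b * f b)
    rw [map_mul]
    simp only [← mul_assoc]
    congr 1
    rw [mul_assoc, mul_assoc, (hfcomm a b).eq])
  have hαinj : Function.Injective α := by
    rw [injective_iff_map_eq_one]
    intro a ha
    have ha' : a * f a = 1 := ha
    have hfaK : f a ∈ K := (Subgroup.zpowers_le.mpr hzGK) (hfz a)
    have haK : a ∈ K := by
      have h1 : a = (f a)⁻¹ := eq_inv_of_mul_eq_one_left ha'
      rw [h1]; exact K.inv_mem hfaK
    have hfa1 : f a = 1 := hfK a haK
    rw [hfa1, mul_one] at ha'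
    exact ha'
  let αe : G ≃* G := MulEquiv.ofBijective α ⟨hαinj, Finite.injective_iff_surjective.mp hαinj⟩
  have hψf : ∀ x, f (ψ x) = 1 := by
    intro x
    have h := DFunLike.congr_fun (hcomm αe ψ) x
    have hfxK : f x ∈ K := (Subgroup.zpowers_le.mpr hzGK) (hfz x)
    have hψfx : ψ (f x) = 1 := hfxK
    have h3 : ψ (x * f x) = ψ x * 1 := by rw [map_mul, hψfx]
    have h4 : ψ x * f (ψ x) = ψ x * 1 := by
      rw [← h3]
      exact h
    exact mul_left_cancel h4
  obtain ⟨q, hq⟩ : ∃ q : G ⧸ K, q ∉ M := by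
    by_contra h
    push_neg at h
    exact hMne_top (((Subgroup.eq_top_iff' M).mpr h))
  obtain ⟨g₀, rfl⟩ := QuotientGroup.mk'_surjective K q
  have hfg₀ : f g₀ ≠ 1 := by
    intro h
    have h1 : ((e ((QuotientGroup.mk' M) ((QuotientGroup.mk' K) g₀)) : Subgroup.zpowers zG) : G)
        = 1 := h
    have h2 : e ((QuotientGroup.mk' M) ((QuotientGroup.mk' K) g₀)) = 1 :=
      Subtype.ext (by simpa using h1)
    have h3 : (QuotientGroup.mk' M) ((QuotientGroup.mk' K) g₀) = 1 := by
      apply e.injective; rw [h2, map_one]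
    exact hq ((QuotientGroup.eq_one_iff _).mp h3)
  apply hfg₀
  have hkmem : (ψ g₀)⁻¹ * g₀ ∈ K := by
    have : ψ ((ψ g₀)⁻¹ * g₀) = 1 := by rw [map_mul, map_inv, hψψ, inv_mul_cancel]
    exact this
  calc f g₀ = f (ψ g₀ * ((ψ g₀)⁻¹ * g₀)) := by rw [mul_inv_cancel_left]
    _ = f (ψ g₀) * f ((ψ g₀)⁻¹ * g₀) := map_mul f _ _
    _ = 1 * 1 := by rw [hψf, hfK _ hkmem]
    _ = 1 := one_mul 1
end
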